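/- arXiv:1206.7077 — 2 statements merged into one kernel-verified Lean document; each statement's English description precedes it below -/
import Mathlib

section
/- Let (σₙ,τ₀ₙ,τ₁ₙ)_{n≥0} be an arbitrary sequence of triples of permutations in S₃ and let i : ℕ → {0,1} be purely periodic with period p ≥ 1 (i.e. i_{m+p} = i_m for all m ≥ 0). Suppose there exist a constant C > 0 and an integer k with 1 ≤ k ≤ p such that for every n ≥ 0 and every pair j, j' ∈ {1,2,3} one has x_{np+k,j} ≤ C·x_{np+k,j'}. Then the intersection Δ(i₀,i₁,…) = ⋂_{n≥0} Δ(i₀,…,iₙ) is a singleton. -/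
open Matrix

noncomputable section

/-- `A₀ = ![![0,0,1],![1,0,0],![0,1,1]]`. -/
def A0 : Matrix (Fin 3) (Fin 3) ℝ := !![0,0,1; 1,0,0; 0,1,1]
/-- `A₁ = ![![1,0,1],![0,1,0],![0,0,1]]`. -/
def A1 : Matrix (Fin 3) (Fin 3) ℝ := !![1,0,1; 0,1,0; 0,0,1]
/-- `B = ![![1,1,1],![0,1,1],![0,0,1]]`. -/
def Bm : Matrix (Fin 3) (Fin 3) ℝ := !![1,1,1; 0,1,1; 0,0,1]

/-- The permutation matrix of `ρ`: entry `(i,j)` is `1` iff `ρ i = j`.  In particular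
`P (finRotate 3)`, the matrix of the cycle `(1 2 3)`, is `![![0,1,0],![0,0,1],![1,0,0]]`. -/
def P (ρ : Equiv.Perm (Fin 3)) : Matrix (Fin 3) (Fin 3) ℝ := ρ.permMatrix ℝ

/-- The pair of TRIP matrices `F₀ = P_σ·A₀·P_{τ₀}`, `F₁ = P_σ·A₁·P_{τ₁}` of a triple
of permutations, as a function `Fin 2 → Matrix`. -/
def Fmat (σ τ0 τ1 : Equiv.Perm (Fin 3)) : Fin 2 → Matrix (Fin 3) (Fin 3) ℝ :=
  ![P σ * A0 * P τ0, P σ * A1 * P τ1]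

/-- `prodMat G n = B · (G 0) · (G 1) ⋯ (G n)`. -/
def prodMat (G : ℕ → Matrix (Fin 3) (Fin 3) ℝ) (n : ℕ) : Matrix (Fin 3) (Fin 3) ℝ :=
  Bm * ((List.range (n+1)).map G).prod

/-- The triangle `Δ(i₀,…,iₙ)`: the convex hull of the images under
`π(x₀,x₁,x₂) = (x₁/x₀, x₂/x₀)` of the three columns of `M`. -/
def tri (M : Matrix (Fin 3) (Fin 3) ℝ) : Set (ℝ × ℝ) :=
  convexHull ℝ {p | ∃ j : Fin 3, p = (M 1 j / M 0 j, M 2 j / M 0 j)}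

/-- `Δ(i₀,i₁,…) = ⋂ₙ Δ(i₀,…,iₙ)`, for the sequence of matrices `G m = F_{i_m}`. -/
def DeltaInf (G : ℕ → Matrix (Fin 3) (Fin 3) ℝ) : Set (ℝ × ℝ) :=
  ⋂ n : ℕ, tri (prodMat G n)

/-- The structural properties of an allowed matrix. -/
def Good (A : Matrix (Fin 3) (Fin 3) ℝ) : Prop :=
  (∀ l j, A l j = 0 ∨ A l j = 1) ∧
  (∀ j, ∃ l, A l j = 1) ∧
  (∀ l, 1 ≤ ∑ j, A l j) ∧
  (∀ l, ∑ j, A l j ≤ 2) ∧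
  (∃ l, 2 ≤ ∑ j, A l j) ∧
  (A.det = 1 ∨ A.det = -1) ∧
  (∃ Z : Matrix (Fin 3) (Fin 3) ℤ, A = Z.map (Int.cast : ℤ → ℝ))

lemma good_A0 : Good A0 := by
  refine ⟨?_, ?_, ?_, ?_, ?_, ?_, ?_⟩
  · intro l j; fin_cases l <;> fin_cases j <;> norm_num [A0, Matrix.vecHead, Matrix.vecTail]
  · intro j; fin_cases j
    · exact ⟨1, by norm_num [A0]⟩
    · exact ⟨2, by norm_num [A0, Matrix.cons_val_two]⟩
    · exact ⟨0, by norm_num [A0]⟩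
  · intro l; fin_cases l <;> norm_num [A0, Fin.sum_univ_three, Matrix.cons_val_two]
  · intro l; fin_cases l <;> norm_num [A0, Fin.sum_univ_three, Matrix.cons_val_two]
  · exact ⟨2, by norm_num [A0, Fin.sum_univ_three, Matrix.cons_val_two]⟩
  · left; norm_num [A0, Matrix.det_fin_three, Matrix.vecHead, Matrix.vecTail, Matrix.cons_val_two]
  · exact ⟨!![0,0,1; 1,0,0; 0,1,1], by ext l j; fin_cases l <;> fin_cases j <;> norm_num [A0, Matrix.vecHead, Matrix.vecTail]⟩

lemma good_A1 : Good A1 := by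
  refine ⟨?_, ?_, ?_, ?_, ?_, ?_, ?_⟩
  · intro l j; fin_cases l <;> fin_cases j <;> norm_num [A1, Matrix.vecHead, Matrix.vecTail]
  · intro j; fin_cases j
    · exact ⟨0, by norm_num [A1]⟩
    · exact ⟨1, by norm_num [A1]⟩
    · exact ⟨2, by norm_num [A1, Matrix.cons_val_two]⟩
  · intro l; fin_cases l <;> norm_num [A1, Fin.sum_univ_three, Matrix.cons_val_two]
  · intro l; fin_cases l <;> norm_num [A1, Fin.sum_univ_three, Matrix.cons_val_two]
  · exact ⟨0, by norm_num [A1, Fin.sum_univ_three, Matrix.cons_val_two]⟩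
  · left; norm_num [A1, Matrix.det_fin_three, Matrix.vecHead, Matrix.vecTail, Matrix.cons_val_two]
  · exact ⟨!![1,0,1; 0,1,0; 0,0,1], by ext l j; fin_cases l <;> fin_cases j <;> norm_num [A1, Matrix.vecHead, Matrix.vecTail]⟩

lemma perm_mul_mul_perm (σ τ : Equiv.Perm (Fin 3)) (A : Matrix (Fin 3) (Fin 3) ℝ) :
    P σ * A * P τ = A.submatrix σ τ.symm := by
  rw [P, P, Equiv.Perm.permMatrix, Equiv.Perm.permMatrix, Matrix.mul_assoc,
    PEquiv.mul_toMatrix_toPEquiv, PEquiv.toMatrix_toPEquiv_mul, Matrix.submatrix_submatrix]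
  rfl

lemma permMatrix_int (σ : Equiv.Perm (Fin 3)) :
    P σ = (σ.permMatrix ℤ).map (Int.cast : ℤ → ℝ) := by
  ext i j
  simp only [P, Equiv.Perm.permMatrix, PEquiv.toMatrix_apply, Equiv.toPEquiv_apply,
    Matrix.map_apply, Option.mem_def, Option.some.injEq]
  split <;> simp

lemma map_int_mul (X Y : Matrix (Fin 3) (Fin 3) ℤ) :
    (X.map (Int.cast : ℤ → ℝ)) * (Y.map (Int.cast : ℤ → ℝ)) = (X * Y).map (Int.cast : ℤ → ℝ) := by
  ext i j
  simp [Matrix.mul_apply]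

lemma good_perm (σ τ : Equiv.Perm (Fin 3)) (A : Matrix (Fin 3) (Fin 3) ℝ) (hA : Good A) :
    Good (P σ * A * P τ) := by
  obtain ⟨h01, hcol, hrow1, hrow2, hrow2', hdet, Z, hZ⟩ := hA
  have hdetP : ∀ ρ : Equiv.Perm (Fin 3), (P ρ).det = 1 ∨ (P ρ).det = -1 := by
    intro ρ
    rw [P, Matrix.det_permutation]
    rcases Int.units_eq_one_or ρ.sign with h | h <;> rw [h] <;> simp
  constructor
  · rw [perm_mul_mul_perm]; intro l j; exact h01 _ _
  constructor
  · rw [perm_mul_mul_perm]; intro j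
    obtain ⟨l, hl⟩ := hcol (τ.symm j); exact ⟨σ.symm l, by simpa using hl⟩
  constructor
  · rw [perm_mul_mul_perm]; intro l
    have h : ∑ j, A.submatrix σ τ.symm l j = ∑ j, A (σ l) j :=
      Fintype.sum_equiv τ.symm _ _ (fun j => rfl)
    rw [h]; exact hrow1 _
  constructor
  · rw [perm_mul_mul_perm]; intro l
    have h : ∑ j, A.submatrix σ τ.symm l j = ∑ j, A (σ l) j :=
      Fintype.sum_equiv τ.symm _ _ (fun j => rfl)
    rw [h]; exact hrow2 _
  constructor
  · rw [perm_mul_mul_perm]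
    obtain ⟨l, hl⟩ := hrow2'
    refine ⟨σ.symm l, ?_⟩
    have h : ∑ j, A.submatrix σ τ.symm (σ.symm l) j = ∑ j, A l j := by
      refine Fintype.sum_equiv τ.symm _ _ (fun j => ?_)
      simp [Matrix.submatrix_apply]
    rw [h]; exact hl
  constructor
  · rw [Matrix.det_mul, Matrix.det_mul]
    rcases hdetP σ with h1 | h1 <;> rcases hdet with h2 | h2 <;>
      rcases hdetP τ with h3 | h3 <;> rw [h1, h2, h3] <;> norm_num
  · refine ⟨σ.permMatrix ℤ * Z * τ.permMatrix ℤ, ?_⟩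
    rw [hZ, permMatrix_int σ, permMatrix_int τ, map_int_mul, map_int_mul]

lemma good_Fmat (σ τ0 τ1 : Equiv.Perm (Fin 3)) (ε : Fin 2) : Good (Fmat σ τ0 τ1 ε) := by
  fin_cases ε
  · exact good_perm σ τ0 A0 good_A0
  · exact good_perm σ τ1 A1 good_A1


section Seq

variable (G : ℕ → Matrix (Fin 3) (Fin 3) ℝ)

lemma prodMat_succ (n : ℕ) : prodMat G (n+1) = prodMat G n * G (n+1) := by
  rw [prodMat, prodMat, List.range_succ, List.map_append, List.prod_append]
  simp [Matrix.mul_assoc]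

/-- the block product `G (a+1) * ⋯ * G (a+m)`. -/
def blk (a m : ℕ) : Matrix (Fin 3) (Fin 3) ℝ :=
  ((List.range m).map (fun t => G (a+1+t))).prod

lemma blk_zero (a : ℕ) : blk G a 0 = 1 := by simp [blk]

lemma blk_succ (a m : ℕ) : blk G a (m+1) = blk G a m * G (a+1+m) := by
  rw [blk, blk, List.range_succ, List.map_append, List.prod_append]
  simp

lemma prodMat_add_blk (a m : ℕ) : prodMat G (a+m) = prodMat G a * blk G a m := by
  induction m with
  | zero => simp [blk_zero]
  | succ m ih =>
      have : a + (m+1) = (a+m) + 1 := by ring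
      rw [this, prodMat_succ, ih, blk_succ, Matrix.mul_assoc]
      congr 2
      ring_nf

/-- structural properties of block products: nonnegative, entries `0` or `≥ 1`,
every column hits `≥ 1`, entries bounded by `c`, determinant `±1`, integer entries. -/
def Nice (A : Matrix (Fin 3) (Fin 3) ℝ) (c : ℝ) : Prop :=
  (∀ i j, A i j = 0 ∨ 1 ≤ A i j) ∧
  (∀ j, ∃ i, 1 ≤ A i j) ∧
  (∀ i, ∑ j, A i j ≤ c) ∧
  (A.det = 1 ∨ A.det = -1) ∧
  (∃ Z : Matrix (Fin 3) (Fin 3) ℤ, A = Z.map (Int.cast : ℤ → ℝ))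

lemma Nice.nonneg {A : Matrix (Fin 3) (Fin 3) ℝ} {c : ℝ} (h : Nice A c) :
    ∀ i j, 0 ≤ A i j := by
  intro i j
  rcases h.1 i j with h' | h' <;> linarith

lemma Nice.entry_le {A : Matrix (Fin 3) (Fin 3) ℝ} {c : ℝ} (h : Nice A c) :
    ∀ i j, A i j ≤ c := by
  intro i j
  calc A i j ≤ ∑ j', A i j' := by
        refine Finset.single_le_sum (fun j' _ => h.nonneg i j') (Finset.mem_univ j)
    _ ≤ c := h.2.2.1 i

lemma nice_one : Nice (1 : Matrix (Fin 3) (Fin 3) ℝ) 1 := by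
  refine ⟨?_, ?_, ?_, ?_, ?_⟩
  · intro i j
    by_cases h : i = j <;> simp [Matrix.one_apply, h]
  · intro j; exact ⟨j, by simp [Matrix.one_apply]⟩
  · intro i; simp [Matrix.one_apply]
  · simp
  · exact ⟨1, by ext i j; by_cases h : i = j <;> simp [Matrix.one_apply, h]⟩

lemma nice_mul {A B : Matrix (Fin 3) (Fin 3) ℝ} {c : ℝ} (hA : Nice A c) (hB : Good B) :
    Nice (A * B) (2 * c) := by
  obtain ⟨h01, hcol, hrow1, hrow2, _, hdet, Z, hZ⟩ := hB
  have hBnn : ∀ l j, 0 ≤ B l j := by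
    intro l j; rcases h01 l j with h | h <;> simp [h]
  have hB1 : ∀ l j, B l j ≤ 1 := by
    intro l j; rcases h01 l j with h | h <;> simp [h]
  refine ⟨?_, ?_, ?_, ?_, ?_⟩
  · intro i j
    rw [Matrix.mul_apply]
    by_cases hz : ∀ l, A i l * B l j = 0
    · left; exact Finset.sum_eq_zero (fun l _ => hz l)
    · push_neg at hz
      obtain ⟨l, hl⟩ := hz
      right
      have h1 : 1 ≤ A i l * B l j := by
        rcases hA.1 i l with h | h
        · exfalso; exact hl (by rw [h, zero_mul])
        rcases h01 l j with h' | h'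
        · exfalso; exact hl (by rw [h', mul_zero])
        · rw [h', mul_one]; exact h
      calc (1:ℝ) ≤ A i l * B l j := h1
        _ ≤ ∑ l', A i l' * B l' j :=
          Finset.single_le_sum (fun l' _ => mul_nonneg (hA.nonneg i l') (hBnn l' j))
            (Finset.mem_univ l)
  · intro j
    obtain ⟨l, hl⟩ := hcol j
    obtain ⟨i, hi⟩ := hA.2.1 l
    refine ⟨i, ?_⟩
    rw [Matrix.mul_apply]
    calc (1:ℝ) ≤ A i l * B l j := by rw [hl, mul_one]; exact hi
      _ ≤ ∑ l', A i l' * B l' j :=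
        Finset.single_le_sum (fun l' _ => mul_nonneg (hA.nonneg i l') (hBnn l' j))
          (Finset.mem_univ l)
  · intro i
    have : ∑ j, (A * B) i j = ∑ l, A i l * ∑ j, B l j := by
      simp only [Matrix.mul_apply]
      rw [Finset.sum_comm]
      congr 1; ext l; rw [← Finset.mul_sum]
    rw [this]
    calc ∑ l, A i l * ∑ j, B l j ≤ ∑ l, A i l * 2 := by
          refine Finset.sum_le_sum (fun l _ => ?_)
          exact mul_le_mul_of_nonneg_left (hrow2 l) (hA.nonneg i l)
      _ = (∑ l, A i l) * 2 := by rw [← Finset.sum_mul]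
      _ ≤ c * 2 := by
          have := hA.2.2.1 i
          nlinarith
      _ = 2 * c := by ring
  · rw [Matrix.det_mul]
    rcases hA.2.2.2.1 with h1 | h1 <;> rcases hdet with h2 | h2 <;> rw [h1, h2] <;> norm_num
  · obtain ⟨W, hW⟩ := hA.2.2.2.2
    exact ⟨W * Z, by rw [hW, hZ, map_int_mul]⟩

variable (hG : ∀ m, Good (G m))
include hG

lemma blk_nice (a m : ℕ) : Nice (blk G a m) (2 ^ m) := by
  induction m with
  | zero => rw [blk_zero]; simpa using nice_one
  | succ m ih =>
      rw [blk_succ]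
      have := nice_mul ih (hG (a+1+m))
      convert this using 1
      ring

end Seq

section Seq2

variable (G : ℕ → Matrix (Fin 3) (Fin 3) ℝ)

/-- invariant of the partial products `prodMat`. -/
def InvM (M : Matrix (Fin 3) (Fin 3) ℝ) : Prop :=
  (∀ j, 1 ≤ M 0 j) ∧ (∀ j, 0 ≤ M 2 j) ∧ (∀ j, M 2 j ≤ M 1 j) ∧ (∀ j, M 1 j ≤ M 0 j)

lemma inv_Bm : InvM Bm := by
  refine ⟨?_, ?_, ?_, ?_⟩ <;> intro j <;> fin_cases j <;>
    norm_num [Bm, Matrix.vecHead, Matrix.vecTail, Matrix.cons_val_two]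

lemma inv_mul_good {M B : Matrix (Fin 3) (Fin 3) ℝ} (hM : InvM M) (hB : Good B) :
    InvM (M * B) := by
  obtain ⟨h01, hcol, _, _, _, _, _⟩ := hB
  have hBnn : ∀ l j, 0 ≤ B l j := by
    intro l j; rcases h01 l j with h | h <;> simp [h]
  obtain ⟨hM0, hM2, hM21, hM10⟩ := hM
  have hM1 : ∀ j, 0 ≤ M 1 j := fun j => le_trans (hM2 j) (hM21 j)
  have hM0' : ∀ j, 0 ≤ M 0 j := fun j => le_trans zero_le_one (hM0 j)
  refine ⟨?_, ?_, ?_, ?_⟩ <;> intro j <;> rw [Matrix.mul_apply]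
  · obtain ⟨l, hl⟩ := hcol j
    calc (1:ℝ) ≤ M 0 l * B l j := by rw [hl, mul_one]; exact hM0 l
      _ ≤ ∑ l', M 0 l' * B l' j :=
        Finset.single_le_sum (fun l' _ => mul_nonneg (hM0' l') (hBnn l' j))
          (Finset.mem_univ l)
  · exact Finset.sum_nonneg (fun l _ => mul_nonneg (hM2 l) (hBnn l j))
  · rw [Matrix.mul_apply]
    exact Finset.sum_le_sum (fun l _ => mul_le_mul_of_nonneg_right (hM21 l) (hBnn l j))
  · rw [Matrix.mul_apply]
    exact Finset.sum_le_sum (fun l _ => mul_le_mul_of_nonneg_right (hM10 l) (hBnn l j))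

variable (hG : ∀ m, Good (G m))
include hG

lemma inv_prodMat (n : ℕ) : InvM (prodMat G n) := by
  induction n with
  | zero =>
      have : prodMat G 0 = Bm * G 0 := by rw [prodMat, List.range_succ]; simp
      rw [this]; exact inv_mul_good inv_Bm (hG 0)
  | succ n ih => rw [prodMat_succ]; exact inv_mul_good ih (hG (n+1))

/-- the sum of the first row. -/
def Srow (n : ℕ) : ℝ := ∑ j, prodMat G n 0 j

omit hG in
lemma Srow_def (n : ℕ) : Srow G n = ∑ j, prodMat G n 0 j := rfl

lemma Srow_entry_le (n : ℕ) (j : Fin 3) : prodMat G n 0 j ≤ Srow G n := by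
  refine Finset.single_le_sum (fun j' _ => ?_) (Finset.mem_univ j)
  have := (inv_prodMat G hG n).1 j'
  linarith

lemma Srow_pos (n : ℕ) : 0 < Srow G n := by
  have h0 := (inv_prodMat G hG n).1 0
  have := Srow_entry_le G hG n 0
  linarith

omit hG in
lemma Srow_succ (n : ℕ) :
    Srow G (n+1) = ∑ l, prodMat G n 0 l * (∑ j, G (n+1) l j) := by
  rw [Srow, prodMat_succ]
  simp only [Matrix.mul_apply]
  rw [Finset.sum_comm]
  congr 1; ext l; rw [← Finset.mul_sum]

lemma Srow_mono_succ (n : ℕ) : Srow G n ≤ Srow G (n+1) := by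
  rw [Srow_succ G]
  have h := inv_prodMat G hG n
  calc Srow G n = ∑ l, prodMat G n 0 l * 1 := by simp [Srow]
    _ ≤ ∑ l, prodMat G n 0 l * (∑ j, G (n+1) l j) := by
        refine Finset.sum_le_sum (fun l _ => ?_)
        refine mul_le_mul_of_nonneg_left ((hG (n+1)).2.2.1 l) ?_
        have := h.1 l; linarith

lemma Srow_mono {a b : ℕ} (h : a ≤ b) : Srow G a ≤ Srow G b := by
  induction b with
  | zero => simp_all
  | succ b ih =>
      rcases Nat.lt_or_ge a (b+1) with h' | h'
      · exact le_trans (ih (by omega)) (Srow_mono_succ G hG b)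
      · have : a = b + 1 := by omega
        simp [this]

end Seq2

section Seq3

variable (G : ℕ → Matrix (Fin 3) (Fin 3) ℝ) (hG : ∀ m, Good (G m))
variable (p k : ℕ) (C : ℝ)

/-- the first-row entries, at the special times. -/
def xr (n : ℕ) (j : Fin 3) : ℝ := prodMat G n 0 j

variable (hp : 1 ≤ p) (hC : 1 < C)
variable (hb : ∀ n : ℕ, ∀ j j' : Fin 3,
    prodMat G (n * p + k) 0 j ≤ C * prodMat G (n * p + k) 0 j')

include hG hC hb

omit hC in
lemma Srow_le_entry (n : ℕ) (j : Fin 3) :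
    Srow G (n * p + k) ≤ 3 * C * prodMat G (n * p + k) 0 j := by
  have h0 := hb n 0 j
  have h1 := hb n 1 j
  have h2 := hb n 2 j
  rw [Srow, Fin.sum_univ_three]
  linarith

lemma entry_ge (n : ℕ) (j : Fin 3) :
    (3 * C)⁻¹ * Srow G (n * p + k) ≤ prodMat G (n * p + k) 0 j := by
  have h := Srow_le_entry G hG p k C hb n j
  have h3C : (0:ℝ) < 3 * C := by linarith
  rw [inv_mul_le_iff₀ h3C]
  linarith

lemma Srow_growth (n : ℕ) :
    (1 + (3*C)⁻¹) * Srow G (n * p + k) ≤ Srow G (n * p + k + 1) := by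
  set a := n * p + k
  obtain ⟨l₀, hl₀⟩ := (hG (a+1)).2.2.2.2.1
  have hinv := inv_prodMat G hG a
  have hx : ∀ l, 0 ≤ prodMat G a 0 l := fun l => le_trans zero_le_one (hinv.1 l)
  have key : Srow G a + prodMat G a 0 l₀ ≤ Srow G (a+1) := by
    rw [Srow_succ G]
    have h1 : ∀ l, prodMat G a 0 l * 1 + (if l = l₀ then prodMat G a 0 l else 0)
        ≤ prodMat G a 0 l * (∑ j, G (a+1) l j) := by
      intro l
      by_cases h : l = l₀
      · subst h
        rw [if_pos rfl, mul_one]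
        nlinarith [mul_le_mul_of_nonneg_left hl₀ (hx l)]
      · rw [if_neg h, add_zero, mul_one]
        simpa using mul_le_mul_of_nonneg_left ((hG (a+1)).2.2.1 l) (hx l)
    calc Srow G a + prodMat G a 0 l₀
        = ∑ l, (prodMat G a 0 l * 1 + (if l = l₀ then prodMat G a 0 l else 0)) := by
          rw [Finset.sum_add_distrib, Finset.sum_ite_eq' Finset.univ l₀]
          simp [Srow]
      _ ≤ ∑ l, prodMat G a 0 l * (∑ j, G (a+1) l j) := Finset.sum_le_sum (fun l _ => h1 l)
  have hl₀' := entry_ge G hG p k C hC hb n l₀ -- fixed below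
  have := Srow_entry_le G hG a l₀
  nlinarith [Srow_pos G hG a]

include hp in
lemma Srow_geom (n m : ℕ) :
    (1 + (3*C)⁻¹) ^ m * Srow G (n * p + k) ≤ Srow G ((n + m) * p + k) := by
  induction m with
  | zero => simp
  | succ m ih =>
      have hθ : (0:ℝ) < 1 + (3*C)⁻¹ := by positivity
      have step1 : (1 + (3*C)⁻¹) * Srow G ((n+m) * p + k) ≤ Srow G ((n+m) * p + k + 1) :=
        Srow_growth G hG p k C hC hb (n+m)
      have step2 : Srow G ((n+m) * p + k + 1) ≤ Srow G ((n + (m+1)) * p + k) := by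
        refine Srow_mono G hG ?_
        have : (n + (m+1)) * p = (n+m) * p + p := by ring
        omega
      calc (1 + (3*C)⁻¹) ^ (m+1) * Srow G (n * p + k)
          = (1 + (3*C)⁻¹) * ((1 + (3*C)⁻¹) ^ m * Srow G (n * p + k)) := by ring
        _ ≤ (1 + (3*C)⁻¹) * Srow G ((n+m) * p + k) := by
            exact mul_le_mul_of_nonneg_left ih (le_of_lt hθ)
        _ ≤ Srow G ((n+m) * p + k + 1) := step1
        _ ≤ Srow G ((n + (m+1)) * p + k) := step2

end Seq3

section Seq4

variable (G : ℕ → Matrix (Fin 3) (Fin 3) ℝ) (hG : ∀ m, Good (G m))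
variable (p k : ℕ) (C : ℝ) (m0 : ℕ)
variable (hp : 1 ≤ p) (hC : 1 < C) (hm0 : 3 * C < (1 + (3*C)⁻¹) ^ m0)
variable (hb : ∀ n : ℕ, ∀ j j' : Fin 3,
    prodMat G (n * p + k) 0 j ≤ C * prodMat G (n * p + k) 0 j')

include hG hp hC hm0 hb

/-- Every column of a block product over `m0` periods has at least two entries `≥ 1`. -/
lemma two_support (n : ℕ) (j : Fin 3) :
    ∃ l l' : Fin 3, l ≠ l' ∧ 1 ≤ blk G (n*p+k) (m0*p) l j ∧ 1 ≤ blk G (n*p+k) (m0*p) l' j := by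
  set a := n * p + k with ha
  set R := blk G a (m0*p) with hR
  have hnice : Nice R (2 ^ (m0*p)) := blk_nice G hG a (m0*p)
  obtain ⟨l, hl⟩ := hnice.2.1 j
  by_contra hcon
  push_neg at hcon
  have hzero : ∀ l', l' ≠ l → R l' j = 0 := by
    intro l' hne
    rcases hnice.1 l' j with h | h
    · exact h
    · have := hcon l l' (Ne.symm hne) hl
      linarith
  -- integrality and determinant ⇒ the single entry is exactly 1
  obtain ⟨Z, hZ⟩ := hnice.2.2.2.2
  have hcast : ∀ i j', R i j' = (Z i j' : ℝ) := by intro i j'; rw [hZ]; rfl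
  have hdetZ : Z.det = 1 ∨ Z.det = -1 := by
    have h1 : ((Z.det : ℤ) : ℝ) = R.det := by
      rw [hZ]
      exact (RingHom.map_det (Int.castRingHom ℝ) Z)
    rcases hnice.2.2.2.1 with h | h
    · left; have : ((Z.det : ℤ) : ℝ) = 1 := by rw [h1, h]
      exact_mod_cast this
    · right; have : ((Z.det : ℤ) : ℝ) = -1 := by rw [h1, h]
      exact_mod_cast this
  have hZzero : ∀ l', l' ≠ l → Z l' j = 0 := by
    intro l' hne
    have : (Z l' j : ℝ) = 0 := by rw [← hcast]; exact hzero l' hne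
    exact_mod_cast this
  have hupd : Z.updateCol j ((Z l j) • (Pi.single l 1)) = Z := by
    ext i j'
    rcases eq_or_ne j' j with h | h
    · subst h
      rw [Matrix.updateCol_self]
      rcases eq_or_ne i l with h' | h'
      · subst h'; simp
      · simp [Pi.single_apply, h', hZzero i h']
    · rw [Matrix.updateCol_ne h]
  have hdvd : Z l j ∣ Z.det := by
    have hdet2 : Z.det = Z l j * (Z.updateCol j (Pi.single l 1)).det := by
      conv_lhs => rw [← hupd]
      exact Matrix.det_updateCol_smul Z j (Z l j) (Pi.single l 1)
    exact ⟨_, hdet2⟩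
  have hZlj : Z l j = 1 := by
    have h1 : (1:ℝ) ≤ (Z l j : ℝ) := by rw [← hcast]; exact hl
    have h1' : 1 ≤ Z l j := by exact_mod_cast h1
    rcases hdetZ with h | h
    · rcases Int.isUnit_iff.1 (isUnit_of_dvd_unit hdvd (by rw [h]; exact isUnit_one)) with
        h' | h' <;> omega
    · rcases Int.isUnit_iff.1 (isUnit_of_dvd_unit hdvd (by rw [h]; exact
        isUnit_one.neg)) with h' | h' <;> omega
  have hRlj : R l j = 1 := by rw [hcast l j, hZlj]; norm_num
  -- the column of the product is a single old column, contradicting geometric growth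
  have hsum : prodMat G ((n + m0) * p + k) 0 j = prodMat G a 0 l := by
    have hadd : (n + m0) * p + k = a + m0 * p := by rw [ha]; ring
    rw [hadd, prodMat_add_blk, Matrix.mul_apply, ← hR]
    rw [Finset.sum_eq_single l]
    · rw [hRlj, mul_one]
    · intro l' _ hne; rw [hzero l' hne, mul_zero]
    · intro h; exact absurd (Finset.mem_univ l) h
  have hgeom := Srow_geom G hG p k C hp hC hb n m0
  have hge := entry_ge G hG p k C hC hb (n + m0) j
  have hle := Srow_entry_le G hG a l
  have hSpos := Srow_pos G hG a
  have h3C : (0:ℝ) < 3 * C := by linarith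
  have hθpos : (0:ℝ) < (1 + (3*C)⁻¹) ^ m0 := by positivity
  -- x_b j ≥ (3C)⁻¹ θ^m0 Srow(a) > Srow(a) ≥ x_a l = x_b j
  have hchain : (3*C)⁻¹ * ((1 + (3*C)⁻¹) ^ m0 * Srow G a) > Srow G a := by
    rw [gt_iff_lt, ← mul_assoc]
    have h' : 1 < (3*C)⁻¹ * (1 + (3*C)⁻¹) ^ m0 := by
      have hd : 1 < (1 + (3*C)⁻¹) ^ m0 / (3*C) := (one_lt_div h3C).2 hm0
      rw [div_eq_inv_mul] at hd
      exact hd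
    nlinarith
  have hmono : (3*C)⁻¹ * ((1 + (3*C)⁻¹) ^ m0 * Srow G (n * p + k))
      ≤ (3*C)⁻¹ * Srow G ((n + m0) * p + k) := by
    refine mul_le_mul_of_nonneg_left hgeom (by positivity)
  rw [hsum] at hge
  have e1 : Srow G a = Srow G (n * p + k) := rfl
  linarith

end Seq4

section Spread

/-- max of three values -/
def mx (f : Fin 3 → ℝ) : ℝ := max (max (f 0) (f 1)) (f 2)
def mn (f : Fin 3 → ℝ) : ℝ := min (min (f 0) (f 1)) (f 2)
def md (f : Fin 3 → ℝ) : ℝ := f 0 + f 1 + f 2 - mx f - mn f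

lemma le_mx (f : Fin 3 → ℝ) (l : Fin 3) : f l ≤ mx f := by
  fin_cases l
  · exact le_max_of_le_left (le_max_left _ _)
  · exact le_max_of_le_left (le_max_right _ _)
  · exact le_max_right _ _

lemma mn_le (f : Fin 3 → ℝ) (l : Fin 3) : mn f ≤ f l := by
  fin_cases l
  · exact le_trans (min_le_left _ _) (min_le_left _ _)
  · exact le_trans (min_le_left _ _) (min_le_right _ _)
  · exact min_le_right _ _

lemma md_le_mx (f : Fin 3 → ℝ) : md f ≤ mx f := by
  unfold md mx mn
  rcases le_total (f 0) (f 1) with h1 | h1 <;> rcases le_total (f 1) (f 2) with h2 | h2 <;>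
    rcases le_total (f 0) (f 2) with h3 | h3 <;>
    simp only [min_def, max_def] <;> split_ifs <;> linarith

lemma mn_le_md (f : Fin 3 → ℝ) : mn f ≤ md f := by
  unfold md mx mn
  rcases le_total (f 0) (f 1) with h1 | h1 <;> rcases le_total (f 1) (f 2) with h2 | h2 <;>
    rcases le_total (f 0) (f 2) with h3 | h3 <;>
    simp only [min_def, max_def] <;> split_ifs <;> linarith

lemma min01 (f : Fin 3 → ℝ) : min (f 0) (f 1) ≤ md f := by
  unfold md mx mn
  rcases le_total (f 0) (f 1) with h1 | h1 <;> rcases le_total (f 1) (f 2) with h2 | h2 <;>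
    rcases le_total (f 0) (f 2) with h3 | h3 <;>
    simp only [min_def, max_def] <;> split_ifs <;> linarith

lemma min02 (f : Fin 3 → ℝ) : min (f 0) (f 2) ≤ md f := by
  unfold md mx mn
  rcases le_total (f 0) (f 1) with h1 | h1 <;> rcases le_total (f 1) (f 2) with h2 | h2 <;>
    rcases le_total (f 0) (f 2) with h3 | h3 <;>
    simp only [min_def, max_def] <;> split_ifs <;> linarith

lemma min12 (f : Fin 3 → ℝ) : min (f 1) (f 2) ≤ md f := by
  unfold md mx mn
  rcases le_total (f 0) (f 1) with h1 | h1 <;> rcases le_total (f 1) (f 2) with h2 | h2 <;>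
    rcases le_total (f 0) (f 2) with h3 | h3 <;>
    simp only [min_def, max_def] <;> split_ifs <;> linarith

lemma min_pair_le_md (f : Fin 3 → ℝ) (a b : Fin 3) (hab : a ≠ b) :
    min (f a) (f b) ≤ md f := by
  fin_cases a <;> fin_cases b
  · exact absurd rfl hab
  · exact min01 f
  · exact min02 f
  · rw [min_comm]; exact min01 f
  · exact absurd rfl hab
  · exact min12 f
  · rw [min_comm]; exact min02 f
  · rw [min_comm]; exact min12 f
  · exact absurd rfl hab

lemma mx_neg (f : Fin 3 → ℝ) : mx (fun l => -f l) = -mn f := by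
  unfold mx mn
  simp only [min_def, max_def] <;> split_ifs <;> linarith

lemma mn_neg (f : Fin 3 → ℝ) : mn (fun l => -f l) = -mx f := by
  unfold mx mn
  simp only [min_def, max_def] <;> split_ifs <;> linarith

lemma md_neg (f : Fin 3 → ℝ) : md (fun l => -f l) = -md f := by
  unfold md
  rw [mx_neg, mn_neg]
  ring

lemma mx_le (f : Fin 3 → ℝ) (c : ℝ) (h : ∀ l, f l ≤ c) : mx f ≤ c := by
  unfold mx
  exact max_le (max_le (h 0) (h 1)) (h 2)

lemma le_mn (f : Fin 3 → ℝ) (c : ℝ) (h : ∀ l, c ≤ f l) : c ≤ mn f := by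
  unfold mn
  exact le_min (le_min (h 0) (h 1)) (h 2)

lemma comb_le (f w : Fin 3 → ℝ) (β : ℝ) (hβ : 0 ≤ β)
    (hw0 : ∀ l, 0 ≤ w l) (hw1 : ∑ l, w l = 1)
    (a b : Fin 3) (hab : a ≠ b) (hwa : β ≤ w a) (hwb : β ≤ w b) :
    ∑ l, w l * f l ≤ (1 - β) * mx f + β * md f := by
  have hmin := min_pair_le_md f a b hab
  obtain ⟨c, hc1, hc2⟩ : ∃ c : Fin 3, β ≤ w c ∧ f c ≤ md f := by
    rcases le_total (f a) (f b) with h | h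
    · exact ⟨a, hwa, by rw [min_eq_left h] at hmin; exact hmin⟩
    · exact ⟨b, hwb, by rw [min_eq_right h] at hmin; exact hmin⟩
  rw [Fin.sum_univ_three] at hw1 ⊢
  have hdm := md_le_mx f
  fin_cases c
  · replace hc1 : β ≤ w 0 := hc1
    replace hc2 : f 0 ≤ md f := hc2
    have p0 : w 0 * f 0 ≤ w 0 * md f := mul_le_mul_of_nonneg_left hc2 (hw0 0)
    have p1 : w 1 * f 1 ≤ w 1 * mx f := mul_le_mul_of_nonneg_left (le_mx f 1) (hw0 1)
    have p2 : w 2 * f 2 ≤ w 2 * mx f := mul_le_mul_of_nonneg_left (le_mx f 2) (hw0 2)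
    have p3 : 0 ≤ (w 0 - β) * (mx f - md f) :=
      mul_nonneg (by linarith [hc1]) (by linarith)
    have p4 : (w 0 + w 1 + w 2) * mx f = mx f := by rw [hw1, one_mul]
    nlinarith [p0, p1, p2, p3, p4]
  · replace hc1 : β ≤ w 1 := hc1
    replace hc2 : f 1 ≤ md f := hc2
    have p0 : w 0 * f 0 ≤ w 0 * mx f := mul_le_mul_of_nonneg_left (le_mx f 0) (hw0 0)
    have p1 : w 1 * f 1 ≤ w 1 * md f := mul_le_mul_of_nonneg_left hc2 (hw0 1)
    have p2 : w 2 * f 2 ≤ w 2 * mx f := mul_le_mul_of_nonneg_left (le_mx f 2) (hw0 2)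
    have p3 : 0 ≤ (w 1 - β) * (mx f - md f) :=
      mul_nonneg (by linarith [hc1]) (by linarith)
    have p4 : (w 0 + w 1 + w 2) * mx f = mx f := by rw [hw1, one_mul]
    nlinarith [p0, p1, p2, p3, p4]
  · replace hc1 : β ≤ w 2 := hc1
    replace hc2 : f 2 ≤ md f := hc2
    have p0 : w 0 * f 0 ≤ w 0 * mx f := mul_le_mul_of_nonneg_left (le_mx f 0) (hw0 0)
    have p1 : w 1 * f 1 ≤ w 1 * mx f := mul_le_mul_of_nonneg_left (le_mx f 1) (hw0 1)
    have p2 : w 2 * f 2 ≤ w 2 * md f := mul_le_mul_of_nonneg_left hc2 (hw0 2)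
    have p3 : 0 ≤ (w 2 - β) * (mx f - md f) :=
      mul_nonneg (by linarith [hc1]) (by linarith)
    have p4 : (w 0 + w 1 + w 2) * mx f = mx f := by rw [hw1, one_mul]
    nlinarith [p0, p1, p2, p3, p4]

lemma comb_ge (f w : Fin 3 → ℝ) (β : ℝ) (hβ : 0 ≤ β)
    (hw0 : ∀ l, 0 ≤ w l) (hw1 : ∑ l, w l = 1)
    (a b : Fin 3) (hab : a ≠ b) (hwa : β ≤ w a) (hwb : β ≤ w b) :
    (1 - β) * mn f + β * md f ≤ ∑ l, w l * f l := by
  have h := comb_le (fun l => -f l) w β hβ hw0 hw1 a b hab hwa hwb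
  rw [mx_neg, md_neg] at h
  have e : ∑ l, w l * (fun l => -f l) l = -(∑ l, w l * f l) := by
    rw [Fin.sum_univ_three, Fin.sum_univ_three]; ring
  rw [e] at h
  linarith

end Spread

section Seq5

variable (G : ℕ → Matrix (Fin 3) (Fin 3) ℝ) (hG : ∀ m, Good (G m))

/-- the vertex coordinates: row `r` divided by row `0`. -/
def qrow (r : Fin 3) (n : ℕ) : Fin 3 → ℝ := fun j => prodMat G n r j / prodMat G n 0 j

include hG

lemma comb_exists (a m : ℕ) (j : Fin 3) :
    ∃ w : Fin 3 → ℝ, (∀ l, 0 ≤ w l) ∧ (∑ l, w l = 1) ∧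
      (∀ r : Fin 3, qrow G r (a+m) j = ∑ l, w l * qrow G r a l) ∧
      (∀ l, 1 ≤ blk G a m l j →
        prodMat G a 0 l / prodMat G (a+m) 0 j ≤ w l) := by
  have hinv := inv_prodMat G hG a
  have hinv' := inv_prodMat G hG (a+m)
  have hD : (1:ℝ) ≤ prodMat G (a+m) 0 j := hinv'.1 j
  have hDpos : (0:ℝ) < prodMat G (a+m) 0 j := by linarith
  have hDne : prodMat G (a+m) 0 j ≠ 0 := ne_of_gt hDpos
  have hR := blk_nice G hG a m
  set R := blk G a m with hRdef
  set D := prodMat G (a+m) 0 j with hDdef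
  have hsum : D = ∑ l, prodMat G a 0 l * R l j := by
    rw [hDdef, prodMat_add_blk, Matrix.mul_apply]
  refine ⟨fun l => prodMat G a 0 l * R l j / D, ?_, ?_, ?_, ?_⟩
  · intro l
    have hx : 0 ≤ prodMat G a 0 l := le_trans zero_le_one (hinv.1 l)
    exact div_nonneg (mul_nonneg hx (hR.nonneg l j)) (le_of_lt hDpos)
  · rw [← Finset.sum_div, ← hsum, div_self hDne]
  · intro r
    have hnum : prodMat G (a+m) r j = ∑ l, prodMat G a r l * R l j := by
      rw [prodMat_add_blk, Matrix.mul_apply]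
    have hterm : ∀ l, (prodMat G a 0 l * R l j / D) * qrow G r a l
        = prodMat G a r l * R l j / D := by
      intro l
      have hx : prodMat G a 0 l ≠ 0 := by
        have := hinv.1 l; intro h; rw [h] at this; linarith
      rw [qrow]
      field_simp
    rw [qrow]
    simp only [hterm]
    rw [← Finset.sum_div, ← hnum, hDdef]
  · intro l hl
    have hx : 0 ≤ prodMat G a 0 l := le_trans zero_le_one (hinv.1 l)
    rw [div_le_div_iff₀ hDpos hDpos]
    have : prodMat G a 0 l * 1 ≤ prodMat G a 0 l * R l j :=
      mul_le_mul_of_nonneg_left hl hx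
    nlinarith

lemma vert_mem_tri (a m : ℕ) (j : Fin 3) :
    (qrow G 1 (a+m) j, qrow G 2 (a+m) j) ∈ tri (prodMat G a) := by
  obtain ⟨w, hw0, hw1, hco, _⟩ := comb_exists G hG a m j
  set g : Fin 3 → ℝ × ℝ := fun l => (qrow G 1 a l, qrow G 2 a l) with hg
  have hmem : Finset.univ.centerMass w g ∈ tri (prodMat G a) := by
    refine Finset.centerMass_mem_convexHull _ (fun l _ => hw0 l) (by rw [hw1]; norm_num)
      (fun l _ => ?_)
    exact ⟨l, rfl⟩
  rw [Finset.centerMass_eq_of_sum_1 _ _ hw1] at hmem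
  have hpt : (qrow G 1 (a+m) j, qrow G 2 (a+m) j) = ∑ l, w l • g l := by
    have h1 := hco 1
    have h2 := hco 2
    rw [Fin.sum_univ_three] at h1 h2 ⊢
    rw [hg]
    simp only [Prod.smul_mk, Prod.mk_add_mk, smul_eq_mul]
    rw [Prod.mk.injEq]
    exact ⟨h1, h2⟩
  rw [hpt]
  exact hmem

lemma tri_nested {a b : ℕ} (h : a ≤ b) : tri (prodMat G b) ⊆ tri (prodMat G a) := by
  obtain ⟨m, rfl⟩ := Nat.le.dest h
  refine convexHull_min ?_ (convex_convexHull ℝ _)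
  rintro z ⟨j, rfl⟩
  exact vert_mem_tri G hG a m j

lemma tri_bounds (n : ℕ) {z : ℝ × ℝ} (hz : z ∈ tri (prodMat G n)) :
    mn (qrow G 1 n) ≤ z.1 ∧ z.1 ≤ mx (qrow G 1 n) ∧
      mn (qrow G 2 n) ≤ z.2 ∧ z.2 ≤ mx (qrow G 2 n) := by
  have lin1 : IsLinearMap ℝ (fun z : ℝ × ℝ => z.1) := ⟨fun p q => rfl, fun c p => rfl⟩
  have lin2 : IsLinearMap ℝ (fun z : ℝ × ℝ => z.2) := ⟨fun p q => rfl, fun c p => rfl⟩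
  refine ⟨?_, ?_, ?_, ?_⟩
  · refine convexHull_min ?_ (convex_halfSpace_ge lin1 _) hz
    rintro _ ⟨j, rfl⟩; exact mn_le _ j
  · refine convexHull_min ?_ (convex_halfSpace_le lin1 _) hz
    rintro _ ⟨j, rfl⟩
    show qrow G 1 n j ≤ mx (qrow G 1 n)
    exact le_mx _ j
  · refine convexHull_min ?_ (convex_halfSpace_ge lin2 _) hz
    rintro _ ⟨j, rfl⟩; exact mn_le _ j
  · refine convexHull_min ?_ (convex_halfSpace_le lin2 _) hz
    rintro _ ⟨j, rfl⟩
    show qrow G 2 n j ≤ mx (qrow G 2 n)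
    exact le_mx _ j

omit hG in
lemma tri_gen_eq (n : ℕ) :
    {p : ℝ × ℝ | ∃ j : Fin 3, p = (prodMat G n 1 j / prodMat G n 0 j,
      prodMat G n 2 j / prodMat G n 0 j)}
      = Set.range (fun l : Fin 3 => (qrow G 1 n l, qrow G 2 n l)) := by
  ext z
  constructor
  · rintro ⟨j, rfl⟩; exact ⟨j, rfl⟩
  · rintro ⟨j, rfl⟩; exact ⟨j, rfl⟩

omit hG in
lemma tri_nonempty (n : ℕ) : (tri (prodMat G n)).Nonempty :=
  ⟨(qrow G 1 n 0, qrow G 2 n 0), subset_convexHull ℝ _ ⟨0, rfl⟩⟩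

omit hG in
lemma tri_compact (n : ℕ) : IsCompact (tri (prodMat G n)) := by
  rw [tri, tri_gen_eq]
  exact (Set.finite_range _).isCompact_convexHull ℝ

omit hG in
lemma tri_closed (n : ℕ) : IsClosed (tri (prodMat G n)) := by
  rw [tri, tri_gen_eq]
  exact (Set.finite_range _).isClosed_convexHull ℝ

end Seq5

section Final

variable (G : ℕ → Matrix (Fin 3) (Fin 3) ℝ) (hG : ∀ m, Good (G m))
variable (p k : ℕ) (C : ℝ) (m0 : ℕ)
variable (hp : 1 ≤ p) (hC : 1 < C) (hm0 : 3 * C < (1 + (3*C)⁻¹) ^ m0)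
variable (hb : ∀ n : ℕ, ∀ j j' : Fin 3,
    prodMat G (n * p + k) 0 j ≤ C * prodMat G (n * p + k) 0 j')

include hG hp hC hm0 hb

lemma spread_contract (r : Fin 3) (s : ℕ) :
    mx (qrow G r (((s+1) * m0) * p + k)) - mn (qrow G r (((s+1) * m0) * p + k)) ≤
      (1 - (3*C*2^(m0*p))⁻¹) *
        (mx (qrow G r ((s * m0) * p + k)) - mn (qrow G r ((s * m0) * p + k))) := by
  set a := (s * m0) * p + k with ha
  set β : ℝ := (3*C*2^(m0*p))⁻¹ with hβ
  have h2P : (1:ℝ) ≤ 2 ^ (m0*p) := one_le_pow₀ (by norm_num)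
  have h3CP : (0:ℝ) < 3*C*2^(m0*p) := by positivity
  have hβpos : 0 < β := by rw [hβ]; positivity
  have hβ1 : β < 1 := by
    rw [hβ, inv_lt_one_iff₀]
    right; nlinarith
  have hbig : ((s+1) * m0) * p + k = a + m0 * p := by rw [ha]; ring
  rw [hbig]
  -- bound each new vertex value
  have key : ∀ j, qrow G r (a + m0*p) j ≤
        (1 - β) * mx (qrow G r a) + β * md (qrow G r a) ∧
      (1 - β) * mn (qrow G r a) + β * md (qrow G r a) ≤ qrow G r (a + m0*p) j := by
    intro j
    obtain ⟨w, hw0, hw1, hco, hwlb⟩ := comb_exists G hG a (m0*p) j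
    obtain ⟨l, l', hll', hRl, hRl'⟩ := two_support G hG p k C m0 hp hC hm0 hb (s*m0) j
    rw [← ha] at hRl hRl'
    -- D ≤ 3C·2^P·(x_a l) for each support index
    have hDb : ∀ l₀ : Fin 3, 1 ≤ blk G a (m0*p) l₀ j → β ≤ w l₀ := by
      intro l₀ hR0
      have hinv := inv_prodMat G hG a
      have hxpos : ∀ l₁, (0:ℝ) < prodMat G a 0 l₁ :=
        fun l₁ => lt_of_lt_of_le zero_lt_one (hinv.1 l₁)
      have hDle : prodMat G (a + m0*p) 0 j ≤ 3*C*2^(m0*p) * prodMat G a 0 l₀ := by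
        have hsum : prodMat G (a + m0*p) 0 j
            = ∑ l₁, prodMat G a 0 l₁ * blk G a (m0*p) l₁ j := by
          rw [prodMat_add_blk, Matrix.mul_apply]
        rw [hsum, Fin.sum_univ_three]
        have hterm : ∀ l₁ : Fin 3, prodMat G a 0 l₁ * blk G a (m0*p) l₁ j
            ≤ (C * prodMat G a 0 l₀) * 2^(m0*p) := by
          intro l₁
          have h1 : prodMat G a 0 l₁ ≤ C * prodMat G a 0 l₀ := hb (s*m0) l₁ l₀
          have h2 : blk G a (m0*p) l₁ j ≤ 2^(m0*p) :=
            (blk_nice G hG a (m0*p)).entry_le l₁ j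
          have h3 : 0 ≤ blk G a (m0*p) l₁ j := (blk_nice G hG a (m0*p)).nonneg l₁ j
          have h4 : 0 ≤ C * prodMat G a 0 l₀ := by nlinarith [hxpos l₀]
          exact mul_le_mul h1 h2 h3 h4
        have := hterm 0; have := hterm 1; have := hterm 2
        nlinarith [hterm 0, hterm 1, hterm 2]
      refine le_trans ?_ (hwlb l₀ hR0)
      have hDpos : (0:ℝ) < prodMat G (a + m0*p) 0 j :=
        lt_of_lt_of_le zero_lt_one ((inv_prodMat G hG (a + m0*p)).1 j)
      rw [hβ, le_div_iff₀ hDpos, inv_mul_le_iff₀ h3CP]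
      exact hDle
    constructor
    · rw [hco r]
      exact comb_le _ w β (le_of_lt hβpos) hw0 hw1 l l' hll' (hDb l hRl) (hDb l' hRl')
    · rw [hco r]
      exact comb_ge _ w β (le_of_lt hβpos) hw0 hw1 l l' hll' (hDb l hRl) (hDb l' hRl')
  have hmx : mx (qrow G r (a + m0*p)) ≤ (1 - β) * mx (qrow G r a) + β * md (qrow G r a) :=
    mx_le _ _ (fun j => (key j).1)
  have hmn : (1 - β) * mn (qrow G r a) + β * md (qrow G r a) ≤ mn (qrow G r (a + m0*p)) :=
    le_mn _ _ (fun j => (key j).2)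
  linarith

lemma spread_iter (r : Fin 3) (s : ℕ) :
    mx (qrow G r ((s * m0) * p + k)) - mn (qrow G r ((s * m0) * p + k)) ≤
      (1 - (3*C*2^(m0*p))⁻¹) ^ s *
        (mx (qrow G r ((0 * m0) * p + k)) - mn (qrow G r ((0 * m0) * p + k))) := by
  have h2P : (1:ℝ) ≤ 2 ^ (m0*p) := one_le_pow₀ (by norm_num)
  have hfac : (0:ℝ) ≤ 1 - (3*C*2^(m0*p))⁻¹ := by
    have h3CP : (0:ℝ) < 3*C*2^(m0*p) := by positivity
    have : (3*C*2^(m0*p))⁻¹ < 1 := by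
      rw [inv_lt_one_iff₀]; right; nlinarith
    linarith
  induction s with
  | zero => simp
  | succ s ih =>
      calc mx (qrow G r (((s+1) * m0) * p + k)) - mn (qrow G r (((s+1) * m0) * p + k))
          ≤ (1 - (3*C*2^(m0*p))⁻¹) *
            (mx (qrow G r ((s * m0) * p + k)) - mn (qrow G r ((s * m0) * p + k))) :=
            spread_contract G hG p k C m0 hp hC hm0 hb r s
        _ ≤ (1 - (3*C*2^(m0*p))⁻¹) * ((1 - (3*C*2^(m0*p))⁻¹) ^ s *
            (mx (qrow G r ((0 * m0) * p + k)) - mn (qrow G r ((0 * m0) * p + k)))) :=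
            mul_le_mul_of_nonneg_left ih hfac
        _ = (1 - (3*C*2^(m0*p))⁻¹) ^ (s+1) *
            (mx (qrow G r ((0 * m0) * p + k)) - mn (qrow G r ((0 * m0) * p + k))) := by
            ring

end Final

theorem abstract_main (G : ℕ → Matrix (Fin 3) (Fin 3) ℝ) (hG : ∀ m, Good (G m))
    (p k : ℕ) (hp : 1 ≤ p) (C : ℝ) (hC : 1 < C)
    (hb : ∀ n : ℕ, ∀ j j' : Fin 3,
      prodMat G (n * p + k) 0 j ≤ C * prodMat G (n * p + k) 0 j') :
    ∃ q : ℝ × ℝ, DeltaInf G = {q} := by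
  have hθ : 1 < 1 + (3*C)⁻¹ := by
    have : (0:ℝ) < (3*C)⁻¹ := by positivity
    linarith
  obtain ⟨m0, hm0⟩ := pow_unbounded_of_one_lt (3*C) hθ
  set β : ℝ := (3*C*2^(m0*p))⁻¹ with hβ
  have h2P : (1:ℝ) ≤ 2 ^ (m0*p) := one_le_pow₀ (by norm_num)
  have h3CP : (0:ℝ) < 3*C*2^(m0*p) := by positivity
  have hβpos : 0 < β := by rw [hβ]; positivity
  have hβ1 : β < 1 := by
    rw [hβ, inv_lt_one_iff₀]; right; nlinarith
  -- nonempty intersection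
  obtain ⟨q, hq⟩ := IsCompact.nonempty_iInter_of_sequence_nonempty_isCompact_isClosed
    (fun n => tri (prodMat G n)) (fun n => tri_nested G hG (Nat.le_succ n))
    (fun n => tri_nonempty G n) (tri_compact G 0) (fun n => tri_closed G n)
  refine ⟨q, ?_⟩
  have hlim : ∀ K : ℝ, Filter.Tendsto (fun s : ℕ => (1 - β) ^ s * K) Filter.atTop (nhds 0) := by
    intro K
    have h := (tendsto_pow_atTop_nhds_zero_of_lt_one (by linarith) (by linarith)
      : Filter.Tendsto (fun s : ℕ => (1 - β) ^ s) Filter.atTop (nhds 0))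
    simpa using h.mul_const K
  have key : ∀ z ∈ DeltaInf G, z = q := by
    intro z hz
    have hmem : ∀ s : ℕ, z ∈ tri (prodMat G ((s * m0) * p + k)) ∧
        q ∈ tri (prodMat G ((s * m0) * p + k)) := by
      intro s
      rw [DeltaInf] at hz
      exact ⟨Set.mem_iInter.1 hz _, Set.mem_iInter.1 hq _⟩
    have hco : ∀ (r : Fin 3) (zr qr : ℝ) (hr : ∀ s : ℕ,
        mn (qrow G r ((s * m0) * p + k)) ≤ zr ∧ zr ≤ mx (qrow G r ((s * m0) * p + k)) ∧
        mn (qrow G r ((s * m0) * p + k)) ≤ qr ∧ qr ≤ mx (qrow G r ((s * m0) * p + k))),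
        zr = qr := by
      intro r zr qr hr
      have habs : ∀ s : ℕ, |zr - qr| ≤ (1 - β) ^ s *
          (mx (qrow G r ((0 * m0) * p + k)) - mn (qrow G r ((0 * m0) * p + k))) := by
        intro s
        have h1 := hr s
        have h2 := spread_iter G hG p k C m0 hp hC hm0 hb r s
        rw [abs_le]
        constructor <;> [linarith [h1.1, h1.2.1, h1.2.2.1, h1.2.2.2];
          linarith [h1.1, h1.2.1, h1.2.2.1, h1.2.2.2]]
      have : |zr - qr| ≤ 0 := ge_of_tendsto' (hlim _) habs
      have := abs_nonneg (zr - qr)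
      have : zr - qr = 0 := by
        rw [← abs_eq_zero]; linarith
      linarith
    have h1 : z.1 = q.1 := by
      refine hco 1 z.1 q.1 (fun s => ?_)
      have hzb := tri_bounds G hG _ (hmem s).1
      have hqb := tri_bounds G hG _ (hmem s).2
      exact ⟨hzb.1, hzb.2.1, hqb.1, hqb.2.1⟩
    have h2 : z.2 = q.2 := by
      refine hco 2 z.2 q.2 (fun s => ?_)
      have hzb := tri_bounds G hG _ (hmem s).1
      have hqb := tri_bounds G hG _ (hmem s).2
      exact ⟨hzb.2.2.1, hzb.2.2.2, hqb.2.2.1, hqb.2.2.2⟩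
    exact Prod.ext h1 h2
  ext z
  constructor
  · intro hz; exact key z hz
  · rintro rfl; exact hq


/-- Corollary 7.1: for a purely periodic digit sequence it suffices to have the
bounded-ratio condition once per period to conclude that `Δ(i₀,i₁,…)` is a single
point. -/
theorem periodic_bounded_ratios_singleton
    (σ τ0 τ1 : ℕ → Equiv.Perm (Fin 3)) (i : ℕ → Fin 2) (p : ℕ) (hp : 1 ≤ p)
    (hper : ∀ m, i (m + p) = i m) (C : ℝ) (hC : 0 < C) (k : ℕ) (hk1 : 1 ≤ k) (hk2 : k ≤ p)
    (hbound : ∀ n : ℕ, ∀ j j' : Fin 3,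
      prodMat (fun m => Fmat (σ m) (τ0 m) (τ1 m) (i m)) (n * p + k) 0 j ≤
        C * prodMat (fun m => Fmat (σ m) (τ0 m) (τ1 m) (i m)) (n * p + k) 0 j') :
    ∃ q : ℝ × ℝ, DeltaInf (fun m => Fmat (σ m) (τ0 m) (τ1 m) (i m)) = {q} := by
  set G : ℕ → Matrix (Fin 3) (Fin 3) ℝ := fun m => Fmat (σ m) (τ0 m) (τ1 m) (i m) with hGdef
  have hG : ∀ m, Good (G m) := fun m => good_Fmat (σ m) (τ0 m) (τ1 m) (i m)
  refine abstract_main G hG p k hp (C + 1) (by linarith) ?_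
  intro n j j'
  have h1 := hbound n j j'
  have h2 : 0 ≤ prodMat G (n * p + k) 0 j' :=
    le_trans zero_le_one ((inv_prodMat G hG (n * p + k)).1 j')
  nlinarith
end
end

section
/- Fix a triple (σ,τ₀,τ₁) of permutations in S₃ with F₀ = P_σ·A₀·P_{τ₀} and F₁ = P_σ·A₁·P_{τ₁}, let ρ ∈ S₃, and set F₀' = P_ρ·F₀·P_ρ⁻¹ and F₁' = P_ρ·F₁·P_ρ⁻¹ (these are the matrices of the triple (ρσ, τ₀ρ⁻¹, τ₁ρ⁻¹)). Let i : ℕ → {0,1} be any sequence. If the intersection Δ(i₀,i₁,…) formed with F₀, F₁ is a singleton, then the intersection Δ'(i₀,i₁,…) formed in the same way with F₀', F₁' is a singleton. -/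
open Matrix

noncomputable section

/-! ### Auxiliary lemmas -/

lemma hBdet : Bm.det = 1 := by norm_num [Bm, Matrix.det_fin_three, Matrix.vecHead, Matrix.vecTail, Matrix.cons_val_two, Matrix.tail_cons, Matrix.head_cons]
lemma hA0det : A0.det = 1 := by norm_num [A0, Matrix.det_fin_three, Matrix.vecHead, Matrix.vecTail, Matrix.cons_val_two, Matrix.tail_cons, Matrix.head_cons]
lemma hA1det : A1.det = 1 := by norm_num [A1, Matrix.det_fin_three, Matrix.vecHead, Matrix.vecTail, Matrix.cons_val_two, Matrix.tail_cons, Matrix.head_cons]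

lemma Bm_inv_mul : Bm⁻¹ * Bm = 1 :=
  Matrix.nonsing_inv_mul Bm (by rw [hBdet]; exact isUnit_one)

lemma Bm_mul_inv : Bm * Bm⁻¹ = 1 :=
  Matrix.mul_nonsing_inv Bm (by rw [hBdet]; exact isUnit_one)

lemma P_mul_P_inv (ρ : Equiv.Perm (Fin 3)) : P ρ * P ρ⁻¹ = 1 := by
  ext i j
  rw [P, P, Equiv.Perm.permMatrix, PEquiv.toMatrix_toPEquiv_mul]
  simp [PEquiv.toMatrix_apply, Equiv.toPEquiv_apply, Matrix.one_apply, eq_comm]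

lemma P_inv_mul_P (ρ : Equiv.Perm (Fin 3)) : P ρ⁻¹ * P ρ = 1 := by
  have := P_mul_P_inv ρ⁻¹; rwa [inv_inv] at this

lemma P_entry_nonneg (ρ : Equiv.Perm (Fin 3)) (a b : Fin 3) : 0 ≤ P ρ a b := by
  rw [P, Equiv.Perm.permMatrix, PEquiv.toMatrix_apply]
  split <;> norm_num

lemma Psign (ρ : Equiv.Perm (Fin 3)) : (P ρ).det ≠ 0 := by
  rw [P, Matrix.det_permutation]
  rcases Int.units_eq_one_or (Equiv.Perm.sign ρ) with h | h <;> simp [h]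

lemma mul_entry_nonneg {A B : Matrix (Fin 3) (Fin 3) ℝ} (hA : ∀ a b, 0 ≤ A a b)
    (hB : ∀ a b, 0 ≤ B a b) (a b : Fin 3) : 0 ≤ (A * B) a b := by
  rw [Matrix.mul_apply]
  exact Finset.sum_nonneg fun k _ => mul_nonneg (hA a k) (hB k b)

lemma A0_nonneg (a b : Fin 3) : 0 ≤ A0 a b := by fin_cases a <;> fin_cases b <;> norm_num [A0]
lemma A1_nonneg (a b : Fin 3) : 0 ≤ A1 a b := by fin_cases a <;> fin_cases b <;> norm_num [A1]
lemma Bm_nonneg (a b : Fin 3) : 0 ≤ Bm a b := by fin_cases a <;> fin_cases b <;> norm_num [Bm]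

lemma Fmat_nonneg (σ τ0 τ1 : Equiv.Perm (Fin 3)) (k : Fin 2) (a b : Fin 3) :
    0 ≤ Fmat σ τ0 τ1 k a b := by
  fin_cases k
  · exact mul_entry_nonneg (mul_entry_nonneg (P_entry_nonneg σ) A0_nonneg) (P_entry_nonneg τ0) a b
  · exact mul_entry_nonneg (mul_entry_nonneg (P_entry_nonneg σ) A1_nonneg) (P_entry_nonneg τ1) a b

lemma Fmat_det (σ τ0 τ1 : Equiv.Perm (Fin 3)) (k : Fin 2) : (Fmat σ τ0 τ1 k).det ≠ 0 := by
  fin_cases k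
  · show (P σ * A0 * P τ0).det ≠ 0
    rw [det_mul, det_mul, hA0det]
    exact mul_ne_zero (mul_ne_zero (Psign σ) one_ne_zero) (Psign τ0)
  · show (P σ * A1 * P τ1).det ≠ 0
    rw [det_mul, det_mul, hA1det]
    exact mul_ne_zero (mul_ne_zero (Psign σ) one_ne_zero) (Psign τ1)

/-- The partial products `G 0 ⋯ G n`. -/
def listN (G : ℕ → Matrix (Fin 3) (Fin 3) ℝ) (n : ℕ) : Matrix (Fin 3) (Fin 3) ℝ :=
  ((List.range (n+1)).map G).prod

lemma listN_zero (G : ℕ → Matrix (Fin 3) (Fin 3) ℝ) : listN G 0 = G 0 := by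
  simp [listN, List.range_succ]

lemma listN_succ (G : ℕ → Matrix (Fin 3) (Fin 3) ℝ) (n : ℕ) :
    listN G (n+1) = listN G n * G (n+1) := by
  rw [listN, listN, List.range_succ]
  simp

lemma prodMat_eq (G : ℕ → Matrix (Fin 3) (Fin 3) ℝ) (n : ℕ) :
    prodMat G n = Bm * listN G n := rfl

lemma listN_nonneg (G : ℕ → Matrix (Fin 3) (Fin 3) ℝ)
    (hG : ∀ m a b, 0 ≤ G m a b) (n : ℕ) (a b : Fin 3) : 0 ≤ listN G n a b := by
  induction n generalizing a b with
  | zero => rw [listN_zero]; exact hG 0 a b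
  | succ n ih => rw [listN_succ]; exact mul_entry_nonneg ih (hG (n+1)) a b

lemma listN_det (G : ℕ → Matrix (Fin 3) (Fin 3) ℝ)
    (hG : ∀ m, (G m).det ≠ 0) (n : ℕ) : (listN G n).det ≠ 0 := by
  induction n with
  | zero => rw [listN_zero]; exact hG 0
  | succ n ih => rw [listN_succ, det_mul]; exact mul_ne_zero ih (hG (n+1))

lemma listN_conj (G : ℕ → Matrix (Fin 3) (Fin 3) ℝ) (ρ : Equiv.Perm (Fin 3)) (n : ℕ) :
    listN (fun m => P ρ * G m * P ρ⁻¹) n = P ρ * listN G n * P ρ⁻¹ := by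
  induction n with
  | zero => rw [listN_zero, listN_zero]
  | succ n ih =>
    rw [listN_succ, listN_succ, ih]
    simp only [mul_assoc]
    rw [← mul_assoc (P ρ⁻¹) (P ρ), P_inv_mul_P, one_mul]

lemma prodMat_conj (G : ℕ → Matrix (Fin 3) (Fin 3) ℝ) (ρ : Equiv.Perm (Fin 3)) (n : ℕ) :
    prodMat (fun m => P ρ * G m * P ρ⁻¹) n
      = (Bm * P ρ * Bm⁻¹) * prodMat G n * P ρ⁻¹ := by
  rw [prodMat_eq, prodMat_eq, listN_conj]
  simp only [mul_assoc]
  rw [← mul_assoc Bm⁻¹ Bm, Bm_inv_mul, one_mul]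

/-- column positivity of the first row of `prodMat`. -/
lemma prodMat_pos (G : ℕ → Matrix (Fin 3) (Fin 3) ℝ)
    (hGnn : ∀ m a b, 0 ≤ G m a b) (hGdet : ∀ m, (G m).det ≠ 0)
    (n : ℕ) (j : Fin 3) : 0 < prodMat G n 0 j := by
  set N := listN G n with hN
  have hnn := listN_nonneg G hGnn n
  have hdet := listN_det G hGdet n
  have hform : prodMat G n 0 j = N 0 j + N 1 j + N 2 j := by
    rw [prodMat_eq, Matrix.mul_apply, Fin.sum_univ_three]
    norm_num [Bm, Matrix.cons_val_two, Matrix.tail_cons, Matrix.head_cons]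
    rfl
  rw [hform]
  have hge : (0:ℝ) ≤ N 0 j + N 1 j + N 2 j := by
    have := hnn 0 j; have := hnn 1 j; have := hnn 2 j; linarith
  rcases lt_or_eq_of_le hge with h | h
  · exact h
  · exfalso
    have h0 : N 0 j = 0 := by have := hnn 0 j; have := hnn 1 j; have := hnn 2 j; linarith
    have h1 : N 1 j = 0 := by have := hnn 0 j; have := hnn 1 j; have := hnn 2 j; linarith
    have h2 : N 2 j = 0 := by have := hnn 0 j; have := hnn 1 j; have := hnn 2 j; linarith
    have hinv : (N⁻¹ * N) j j = 1 := by
      rw [Matrix.nonsing_inv_mul N (Ne.isUnit hdet)]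
      simp [Matrix.one_apply]
    rw [Matrix.mul_apply, Fin.sum_univ_three] at hinv
    have hz : ∀ k : Fin 3, N k j = 0 := by
      intro k; fin_cases k <;> assumption
    rw [hz 0, hz 1, hz 2] at hinv
    norm_num at hinv

lemma tri_mul_perm (M : Matrix (Fin 3) (Fin 3) ℝ) (τ : Equiv.Perm (Fin 3)) :
    tri (M * P τ) = tri M := by
  have hE : ∀ a b, (M * P τ) a b = M a (τ.symm b) := by
    intro a b; rw [P, Equiv.Perm.permMatrix, PEquiv.mul_toMatrix_toPEquiv]; rfl
  unfold tri
  congr 1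
  ext p
  simp only [Set.mem_setOf_eq, hE]
  constructor
  · rintro ⟨j, rfl⟩; exact ⟨τ.symm j, rfl⟩
  · rintro ⟨j, rfl⟩; exact ⟨τ j, by rw [Equiv.symm_apply_apply]⟩

lemma row_sum_perm (ρ : Equiv.Perm (Fin 3)) (Y : Matrix (Fin 3) (Fin 3) ℝ) (j : Fin 3) :
    (Bm * (P ρ * Y)) 0 j = (Bm * Y) 0 j := by
  rw [P, Equiv.Perm.permMatrix, PEquiv.toMatrix_toPEquiv_mul]
  rw [Matrix.mul_apply, Matrix.mul_apply, Fin.sum_univ_three, Fin.sum_univ_three]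
  have hsum : ∑ k : Fin 3, Y (ρ k) j = ∑ k : Fin 3, Y k j := Equiv.sum_comp ρ (fun k => Y k j)
  rw [Fin.sum_univ_three, Fin.sum_univ_three] at hsum
  simp only [Matrix.submatrix_apply, id_eq]
  norm_num [Bm, Matrix.cons_val_two, Matrix.tail_cons, Matrix.head_cons]
  linarith

lemma C_row (ρ : Equiv.Perm (Fin 3)) (j : Fin 3) :
    (Bm * P ρ * Bm⁻¹) 0 j = (1 : Matrix (Fin 3) (Fin 3) ℝ) 0 j := by
  rw [mul_assoc, row_sum_perm, Bm_mul_inv]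

/-- the triangle of `C * M` for a matrix `C` preserving the first coordinate,
expressed via an affine map. -/
lemma tri_affine (C M : Matrix (Fin 3) (Fin 3) ℝ) (T : (ℝ×ℝ) →ᵃ[ℝ] (ℝ×ℝ))
    (hT : ∀ p : ℝ × ℝ, T p
      = (C 1 0 + C 1 1 * p.1 + C 1 2 * p.2, C 2 0 + C 2 1 * p.1 + C 2 2 * p.2))
    (hC0 : C 0 0 = 1) (hC1 : C 0 1 = 0) (hC2 : C 0 2 = 0)
    (hM : ∀ j, 0 < M 0 j) : tri (C * M) = T '' tri M := by
  rw [tri, tri, AffineMap.image_convexHull]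
  congr 1
  have h0 : ∀ j, (C * M) 0 j = M 0 j := by
    intro j; rw [Matrix.mul_apply, Fin.sum_univ_three, hC0, hC1, hC2]; ring
  have key : ∀ j : Fin 3, ((C*M) 1 j / (C*M) 0 j, (C*M) 2 j / (C*M) 0 j)
      = T (M 1 j / M 0 j, M 2 j / M 0 j) := by
    intro j
    have hne : M 0 j ≠ 0 := (hM j).ne'
    rw [hT, h0, Matrix.mul_apply, Matrix.mul_apply, Fin.sum_univ_three, Fin.sum_univ_three]
    refine Prod.ext ?_ ?_ <;> · dsimp only; field_simp; try ring
  ext p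
  simp only [Set.mem_setOf_eq, Set.mem_image]
  constructor
  · rintro ⟨j, rfl⟩; exact ⟨_, ⟨j, rfl⟩, (key j).symm⟩
  · rintro ⟨_, ⟨j, rfl⟩, rfl⟩; exact ⟨j, (key j).symm⟩

/-- If `Δ(i₀,i₁,…)` is a singleton for the TRIP matrices `F₀, F₁` of `(σ,τ₀,τ₁)`,
then it is also a singleton for the conjugated matrices
`F₀' = P_ρ·F₀·P_{ρ⁻¹}`, `F₁' = P_ρ·F₁·P_{ρ⁻¹}` (the matrices of
`(ρσ, τ₀ρ⁻¹, τ₁ρ⁻¹)`), for any `ρ ∈ S₃`. -/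
theorem singleton_of_conjugate
    (σ τ0 τ1 : Equiv.Perm (Fin 3)) (ρ : Equiv.Perm (Fin 3)) (i : ℕ → Fin 2)
    (h : ∃ q : ℝ × ℝ, DeltaInf (fun m => Fmat σ τ0 τ1 (i m)) = {q}) :
    ∃ q : ℝ × ℝ, DeltaInf (fun m => P ρ * Fmat σ τ0 τ1 (i m) * P ρ⁻¹) = {q} := by
  obtain ⟨q, hq⟩ := h
  set G : ℕ → Matrix (Fin 3) (Fin 3) ℝ := fun m => Fmat σ τ0 τ1 (i m) with hGdef
  set C : Matrix (Fin 3) (Fin 3) ℝ := Bm * P ρ * Bm⁻¹ with hCdef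
  -- first-row facts for C
  have hC0 : C 0 0 = 1 := by rw [hCdef, C_row]; simp [Matrix.one_apply]
  have hC1 : C 0 1 = 0 := by rw [hCdef, C_row]; simp [Matrix.one_apply]
  have hC2 : C 0 2 = 0 := by rw [hCdef, C_row]; simp [Matrix.one_apply]
  -- determinant of C is nonzero
  have hdetC : C.det ≠ 0 := by
    rw [hCdef, det_mul, det_mul, Matrix.det_nonsing_inv, hBdet]
    simpa using Psign ρ
  have hd : C 1 1 * C 2 2 - C 1 2 * C 2 1 ≠ 0 := by
    intro hcontra
    apply hdetC
    rw [Matrix.det_fin_three, hC0, hC1, hC2]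
    linarith [hcontra]
  -- the affine map T
  set L : (ℝ×ℝ) →ₗ[ℝ] (ℝ×ℝ) :=
    { toFun := fun p => (C 1 1 * p.1 + C 1 2 * p.2, C 2 1 * p.1 + C 2 2 * p.2)
      map_add' := by intro p r; refine Prod.ext ?_ ?_ <;> · dsimp; ring
      map_smul' := by intro c p; refine Prod.ext ?_ ?_ <;> · dsimp; ring } with hLdef
  set T : (ℝ×ℝ) →ᵃ[ℝ] (ℝ×ℝ) :=
    { toFun := fun p => (C 1 0, C 2 0) + L p
      linear := L
      map_vadd' := by
        intro p v
        rw [vadd_eq_add, vadd_eq_add, map_add]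
        abel } with hTdef
  have hT : ∀ p : ℝ × ℝ, T p
      = (C 1 0 + C 1 1 * p.1 + C 1 2 * p.2, C 2 0 + C 2 1 * p.1 + C 2 2 * p.2) := by
    intro p
    show (C 1 0, C 2 0) + (C 1 1 * p.1 + C 1 2 * p.2, C 2 1 * p.1 + C 2 2 * p.2) = _
    refine Prod.ext ?_ ?_ <;> · dsimp; ring
  -- T is injective
  have hTinj : Function.Injective T := by
    intro p r hpr
    rw [hT, hT, Prod.ext_iff] at hpr
    obtain ⟨e1, e2⟩ := hpr
    dsimp at e1 e2
    refine Prod.ext ?_ ?_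
    · have h1 : (C 1 1 * C 2 2 - C 1 2 * C 2 1) * p.1
          = (C 1 1 * C 2 2 - C 1 2 * C 2 1) * r.1 := by
        linear_combination C 2 2 * e1 - C 1 2 * e2
      exact mul_left_cancel₀ hd h1
    · have h2 : (C 1 1 * C 2 2 - C 1 2 * C 2 1) * p.2
          = (C 1 1 * C 2 2 - C 1 2 * C 2 1) * r.2 := by
        linear_combination C 1 1 * e2 - C 2 1 * e1
      exact mul_left_cancel₀ hd h2
  -- rewrite the triangles
  have htri : ∀ n : ℕ, tri (prodMat (fun m => P ρ * G m * P ρ⁻¹) n)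
      = T '' tri (prodMat G n) := by
    intro n
    rw [prodMat_conj, ← hCdef, tri_mul_perm]
    exact tri_affine C (prodMat G n) T hT hC0 hC1 hC2
      (prodMat_pos G (fun m => Fmat_nonneg σ τ0 τ1 (i m)) (fun m => Fmat_det σ τ0 τ1 (i m)) n)
  refine ⟨T q, ?_⟩
  show DeltaInf (fun m => P ρ * G m * P ρ⁻¹) = {T q}
  have hqmem : ∀ n : ℕ, q ∈ tri (prodMat G n) := by
    intro n
    have : q ∈ DeltaInf G := by rw [hq]; rfl
    exact Set.mem_iInter.mp this n
  ext x
  rw [DeltaInf, Set.mem_iInter]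
  simp only [htri, Set.mem_singleton_iff]
  constructor
  · intro hx
    obtain ⟨a, ha0, hax⟩ := hx 0
    have hmem : a ∈ DeltaInf G := by
      rw [DeltaInf, Set.mem_iInter]
      intro n
      obtain ⟨b, hb, hbx⟩ := hx n
      have hba : b = a := hTinj (by rw [hbx, hax])
      rwa [hba] at hb
    rw [hq, Set.mem_singleton_iff] at hmem
    rw [← hax, hmem]
  · rintro rfl
    intro n
    exact ⟨q, hqmem n, rfl⟩
end
end
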